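/- Let c = (c_1,…,c_n) be a vector of non-negative integers and u ∈ S a c-bounded monomial. Then the c-bounded strongly stable principal ideal B^c(u) has linear quotients with respect to a suitable ordering of its minimal monomial generators. (This is the case j = 0 of the paper's theorem that all homological shift ideals HS_j(B^c(u)) have linear quotients.) -/
import Mathlib


open MvPolynomial

/-- A single Borel move: `b = x_i · (a / x_j)` for some `i < j` with `x_j ∣ x^a`. -/
def BorelMove {n : ℕ} (a b : Fin n →₀ ℕ) : Prop :=
  ∃ i j : Fin n, i < j ∧ a j ≠ 0 ∧ b = a - Finsupp.single j 1 + Finsupp.single i 1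

lemma sum_add_finsupp {n : ℕ} (x y : Fin n →₀ ℕ) :
    ∑ k, (x + y) k = (∑ k, x k) + ∑ k, y k := by
  simp [Finsupp.add_apply, Finset.sum_add_distrib]

lemma sum_single_finsupp {n : ℕ} (i : Fin n) (r : ℕ) :
    ∑ k, (Finsupp.single i r) k = r := by
  simp [Finsupp.single_apply, Finset.sum_ite_eq]

/-- Borel moves preserve total degree. -/
lemma borelMove_sum {n : ℕ} {a b : Fin n →₀ ℕ} (h : BorelMove a b) :
    ∑ k, b k = ∑ k, a k := by
  obtain ⟨i, j, hij, haj, hb⟩ := h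
  have hs : Finsupp.single j 1 ≤ a := Finsupp.single_le_iff.mpr (Nat.one_le_iff_ne_zero.mpr haj)
  have ha : a - Finsupp.single j 1 + Finsupp.single j 1 = a := tsub_add_cancel_of_le hs
  rw [hb, sum_add_finsupp, sum_single_finsupp, ← ha, sum_add_finsupp, sum_single_finsupp]
  rw [ha]

/-- Key exchange lemma. -/
lemma key_exchange {n : ℕ} (c : Fin n → ℕ) {v w μ : Fin n →₀ ℕ}
    (hvb : ∀ i, v i ≤ c i) (hwb : ∀ i, w i ≤ c i)
    (hdeg : ∑ k, v k = ∑ k, w k)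
    (hlt : toLex w < toLex v)
    (hle : v ≤ μ + w) :
    ∃ t s : Fin n, μ t ≠ 0 ∧ t < s ∧ w s ≠ 0 ∧
      (∀ i, ((w - Finsupp.single s 1 + Finsupp.single t 1 : Fin n →₀ ℕ)) i ≤ c i) ∧
      toLex w < toLex (w - Finsupp.single s 1 + Finsupp.single t 1) ∧
      (w - Finsupp.single s 1 + Finsupp.single t 1) ≤ w + Finsupp.single t 1 := by
  obtain ⟨t, hagree0, htlt0⟩ := Finsupp.lex_def.mp hlt
  have hagree : ∀ d < t, w d = v d := hagree0
  have htlt : w t < v t := htlt0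
  have hlet : v t ≤ μ t + w t := by
    have := hle t; rwa [Finsupp.add_apply] at this
  have hμt : μ t ≠ 0 := by omega
  have hex : ∃ s, t < s ∧ w s ≠ 0 := by
    by_contra hcon
    push_neg at hcon
    have h1 : ∑ k ∈ Finset.Iic t, w k = ∑ k, w k := by
      refine Finset.sum_subset (Finset.subset_univ _) fun x _ hx => ?_
      exact hcon x (lt_of_not_ge fun h => hx (Finset.mem_Iic.mpr h))
    have h2 : ∑ k ∈ Finset.Iic t, w k < ∑ k ∈ Finset.Iic t, v k := by
      refine Finset.sum_lt_sum (fun d hd => ?_) ⟨t, Finset.mem_Iic.mpr le_rfl, htlt⟩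
      rcases eq_or_lt_of_le (Finset.mem_Iic.mp hd) with rfl | hdt
      · exact le_of_lt htlt
      · exact le_of_eq (hagree d hdt)
    have h3 : ∑ k ∈ Finset.Iic t, v k ≤ ∑ k, v k :=
      Finset.sum_le_sum_of_subset (Finset.subset_univ _)
    omega
  obtain ⟨s, hts, hws⟩ := hex
  have hst : s ≠ t := ne_of_gt hts
  have hw' : ∀ i, ((w - Finsupp.single s 1 + Finsupp.single t 1 : Fin n →₀ ℕ)) i
      = w i - (if s = i then 1 else 0) + (if t = i then 1 else 0) := by
    intro i
    rw [Finsupp.add_apply, Finsupp.tsub_apply, Finsupp.single_apply, Finsupp.single_apply]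
  refine ⟨t, s, hμt, hts, hws, ?_, ?_, ?_⟩
  · intro i
    have h1 := hvb i
    have h2 := hvb t
    have h3 := hwb i
    rw [hw' i]
    split_ifs with h5 h6 h6
    · exact absurd (h5.trans h6.symm) hst
    · omega
    · subst h6; omega
    · omega
  · refine Finsupp.lex_def.mpr ⟨t, fun d hd => ?_, ?_⟩
    · simp only [ofLex_toLex]
      rw [hw' d, if_neg (by rintro rfl; exact absurd (hd.trans hts) (lt_irrefl _)),
        if_neg (by rintro rfl; exact absurd hd (lt_irrefl _))]
      omega
    · simp only [ofLex_toLex]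
      rw [hw' t, if_neg hst, if_pos rfl]
      omega
  · intro i
    rw [hw' i, Finsupp.add_apply, Finsupp.single_apply]
    split_ifs <;> omega

/-- for any `c`-bounded monomial `u`, the `c`-bounded strongly stable principal ideal
`B^c(u)` (whose minimal monomial generators are exactly the monomials reachable from `u` by chains
of Borel moves with all intermediate monomials `c`-bounded) has linear quotients with respect to a
suitable ordering `w_1, …, w_m` of its minimal monomial generators. -/
theorem stmt_4 {K : Type*} [Field K] {n : ℕ} (c : Fin n → ℕ) (u : Fin n →₀ ℕ)
    (hu : ∀ i, u i ≤ c i) :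
    ∃ (m : ℕ) (w : Fin m → (Fin n →₀ ℕ)), Function.Injective w ∧
      (Set.range w =
        {v | Relation.ReflTransGen (fun x y => BorelMove x y ∧ ∀ i, y i ≤ c i) u v}) ∧
      ∀ j : Fin m, ∃ T : Set (Fin n),
        Submodule.colon
          (Ideal.span {p : MvPolynomial (Fin n) K | ∃ i, i < j ∧ p = monomial (w i) 1})
          (Ideal.span {(monomial (w j) (1 : K))})
        = Ideal.span (MvPolynomial.X '' T) := by
  classical
  set G : Set (Fin n →₀ ℕ) :=
    {v | Relation.ReflTransGen (fun x y => BorelMove x y ∧ ∀ i, y i ≤ c i) u v} with hG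
  have hGb : ∀ v ∈ G, ∀ i, v i ≤ c i := by
    intro v hv
    induction hv with
    | refl => exact hu
    | tail _ h ih => exact h.2
  have hGd : ∀ v ∈ G, ∑ k, v k = ∑ k, u k := by
    intro v hv
    induction hv with
    | refl => rfl
    | tail _ h ih => rw [borelMove_sum h.1, ih]
  have hGfin : G.Finite := by
    have hfin : (Set.univ.pi fun i => Set.Iic (c i) : Set (Fin n → ℕ)).Finite :=
      Set.Finite.pi fun i => Set.finite_Iic (c i)
    have hpre : ((fun v : Fin n →₀ ℕ => (v : Fin n → ℕ)) ⁻¹'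
        (Set.univ.pi fun i => Set.Iic (c i))).Finite :=
      Set.Finite.preimage (fun a _ b _ h => Finsupp.ext fun i => congrFun h i) hfin
    refine Set.Finite.subset hpre ?_
    intro v hv
    intro i _
    exact hGb v hv i
  set Gl : Finset ((Lex (Fin n →₀ ℕ))ᵒᵈ) :=
    hGfin.toFinset.image (fun v => OrderDual.toDual (toLex v)) with hGl
  set e := Gl.orderIsoOfFin rfl with he
  set w : Fin Gl.card → (Fin n →₀ ℕ) :=
    fun i => ofLex (OrderDual.ofDual ((e i : (Lex (Fin n →₀ ℕ))ᵒᵈ))) with hwdef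
  have hwval : ∀ i, OrderDual.toDual (toLex (w i)) = (e i : (Lex (Fin n →₀ ℕ))ᵒᵈ) := fun i => rfl
  have hwinj : Function.Injective w := by
    intro i j h
    apply e.injective
    apply Subtype.ext
    rw [← hwval i, ← hwval j, h]
  have hwmem : ∀ i, w i ∈ G := by
    intro i
    have h2 : ((e i : (Lex (Fin n →₀ ℕ))ᵒᵈ)) ∈
        hGfin.toFinset.image (fun v => OrderDual.toDual (toLex v)) := (e i).2
    obtain ⟨v, hv, hveq⟩ := Finset.mem_image.mp h2
    have hvG : v ∈ G := hGfin.mem_toFinset.mp hv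
    have hwi : w i = v := by
      rw [hwdef]
      simp only [← hveq]
      rfl
    exact Set.mem_of_eq_of_mem hwi hvG
  have hwsurj : ∀ v ∈ G, ∃ i, w i = v := by
    intro v hv
    have hmem : OrderDual.toDual (toLex v) ∈ Gl :=
      Finset.mem_image_of_mem _ (hGfin.mem_toFinset.mpr hv)
    refine ⟨e.symm ⟨_, hmem⟩, ?_⟩
    rw [hwdef]
    simp only []
    rw [e.apply_symm_apply]
    rfl
  have hrange : Set.range w = G :=
    Set.ext fun v => ⟨fun ⟨i, hi⟩ => hi ▸ hwmem i, fun hv => (hwsurj v hv).imp fun i h => h⟩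
  have hord : ∀ {i j : Fin Gl.card}, i < j → toLex (w j) < toLex (w i) := by
    intro i j hij
    have h1 : e i < e j := e.strictMono hij
    have h2 : (e i : (Lex (Fin n →₀ ℕ))ᵒᵈ) < (e j : (Lex (Fin n →₀ ℕ))ᵒᵈ) := h1
    rw [← hwval i, ← hwval j] at h2
    exact h2
  have hindex : ∀ i j : Fin Gl.card, toLex (w j) < toLex (w i) → i < j := by
    intro i j h
    rcases lt_trichotomy i j with h' | rfl | h'
    · exact h'
    · exact absurd h (lt_irrefl _)
    · exact absurd (h.trans (hord h')) (lt_irrefl _)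
  refine ⟨Gl.card, w, hwinj, hrange, ?_⟩
  intro j
  set Sgen : Set (Fin n →₀ ℕ) := w '' {i | i < j} with hSgendef
  have hSgen : ∀ v, v ∈ Sgen ↔ (v ∈ G ∧ toLex (w j) < toLex v) := by
    intro v
    constructor
    · rintro ⟨i, hi, rfl⟩
      exact ⟨hwmem i, hord hi⟩
    · rintro ⟨hv, hlex⟩
      obtain ⟨i, rfl⟩ := hwsurj v hv
      exact ⟨i, hindex _ _ hlex, rfl⟩
  have hset : {p : MvPolynomial (Fin n) K | ∃ i, i < j ∧ p = monomial (w i) 1}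
      = (fun s => monomial s (1 : K)) '' Sgen := by
    ext p
    constructor
    · rintro ⟨i, hi, rfl⟩
      exact ⟨w i, ⟨i, hi, rfl⟩, rfl⟩
    · rintro ⟨v, ⟨i, hi, rfl⟩, rfl⟩
      exact ⟨i, hi, rfl⟩
  set I : Ideal (MvPolynomial (Fin n) K) :=
    Ideal.span ((fun s => monomial s (1 : K)) '' Sgen) with hI
  refine ⟨{t | monomial (w j + Finsupp.single t 1) (1 : K) ∈ I}, ?_⟩
  rw [hset]
  apply le_antisymm
  · intro f hf
    rw [Ideal.mem_colon_span_singleton] at hf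
    rw [mem_ideal_span_X_image]
    intro μ hμ
    have hc : MvPolynomial.coeff (μ + w j) (f * monomial (w j) 1) = MvPolynomial.coeff μ f := by
      rw [coeff_mul_monomial, mul_one]
    have hsupp : (μ + w j) ∈ (f * monomial (w j) 1).support := by
      rw [MvPolynomial.mem_support_iff, hc]
      exact MvPolynomial.mem_support_iff.mp hμ
    obtain ⟨v, hvS, hvle⟩ := mem_ideal_span_monomial_image.mp hf _ hsupp
    obtain ⟨hvG, hvlex⟩ := (hSgen v).mp hvS
    obtain ⟨t, s, hμt, hts, hws, hb, hlex', hle'⟩ :=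
      key_exchange c (hGb v hvG) (hGb _ (hwmem j))
        ((hGd v hvG).trans (hGd _ (hwmem j)).symm) hvlex hvle
    refine ⟨t, ?_, hμt⟩
    rw [Set.mem_setOf_eq, mem_ideal_span_monomial_image]
    intro xi hxi
    have hxieq : xi = w j + Finsupp.single t 1 := by
      simpa [MvPolynomial.support_monomial] using hxi
    subst hxieq
    refine ⟨w j - Finsupp.single s 1 + Finsupp.single t 1, (hSgen _).mpr ⟨?_, hlex'⟩, hle'⟩
    exact Relation.ReflTransGen.tail (hwmem j) ⟨⟨t, s, hts, hws, rfl⟩, hb⟩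
  · rw [Ideal.span_le]
    rintro p ⟨t, ht, rfl⟩
    rw [SetLike.mem_coe, Ideal.mem_colon_span_singleton]
    have hXt : (X t : MvPolynomial (Fin n) K) * monomial (w j) 1
        = monomial (w j + Finsupp.single t 1) 1 := by
      rw [X, monomial_mul, one_mul, add_comm]
    rw [hXt]
    exact ht
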